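/- For independent Boolean random variables evaluation is sound for linear formulas: if φ is a formula over ∧, ∨, atoms in which each atom occurs at most once, ρ assigns to each atom an independent Boolean random variable, and each atom A satisfies P(ρ(A) = true) ∈ [t_A, 1−f_A] with (t_A,f_A) ∈ C, then P(⟦φ⟧ρ = true) ∈ [t, 1−f] where (t,f) is the confidence of φ computed compositionally using the conjunction operation (t,f),(t',f') ↦ (t·t', f+f'−f·f') and disjunction operation (t,f),(t',f') ↦ (t+t'−t·t', f·f'). -/

import Mathlib

open MeasureTheory ProbabilityTheory

/-- Propositional formulas over atoms ℕ, conjunction and disjunction. -/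
inductive Form where
  | atom : ℕ → Form
  | and  : Form → Form → Form
  | or   : Form → Form → Form

/-- The list of atoms occurring in a formula (with multiplicity). -/
def Form.atomList : Form → List ℕ
  | .atom A => [A]
  | .and φ ψ => φ.atomList ++ ψ.atomList
  | .or φ ψ => φ.atomList ++ ψ.atomList

/-- A formula is linear when each atom occurs at most once. -/
def Form.Linear (φ : Form) : Prop := φ.atomList.Nodup

/-- Pointwise Boolean evaluation under a context. -/
def Form.eval {Ω : Type*} (ρ : ℕ → Ω → Bool) : Form → Ω → Bool
  | .atom A, ω => ρ A ω
  | .and φ ψ, ω => φ.eval ρ ω && ψ.eval ρ ω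
  | .or φ ψ, ω => φ.eval ρ ω || ψ.eval ρ ω

/-- Compositional confidence evaluation. -/
def Form.evalConf (c : ℕ → ℝ × ℝ) : Form → ℝ × ℝ
  | .atom A => c A
  | .and φ ψ => ((φ.evalConf c).1 * (ψ.evalConf c).1,
      (φ.evalConf c).2 + (ψ.evalConf c).2 - (φ.evalConf c).2 * (ψ.evalConf c).2)
  | .or φ ψ => ((φ.evalConf c).1 + (ψ.evalConf c).1 - (φ.evalConf c).1 * (ψ.evalConf c).1,
      (φ.evalConf c).2 * (ψ.evalConf c).2)

/-- Evaluation under a Boolean valuation. -/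
def Form.evalV (v : ℕ → Bool) : Form → Bool
  | .atom A => v A
  | .and φ ψ => φ.evalV v && ψ.evalV v
  | .or φ ψ => φ.evalV v || ψ.evalV v

lemma Form.eval_eq_evalV {Ω : Type*} (ρ : ℕ → Ω → Bool) (φ : Form) (ω : Ω) :
    φ.eval ρ ω = φ.evalV (fun A => ρ A ω) := by
  induction φ with
  | atom A => rfl
  | and φ ψ ihφ ihψ => simp [Form.eval, Form.evalV, ihφ, ihψ]
  | or φ ψ ihφ ihψ => simp [Form.eval, Form.evalV, ihφ, ihψ]

lemma Form.evalV_congr {v w : ℕ → Bool} (φ : Form)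
    (h : ∀ A ∈ φ.atomList, v A = w A) : φ.evalV v = φ.evalV w := by
  induction φ with
  | atom A => exact h A (by simp [Form.atomList])
  | and φ ψ ihφ ihψ =>
      simp only [Form.evalV]
      rw [ihφ (fun A hA => h A (by simp [Form.atomList, hA])),
        ihψ (fun A hA => h A (by simp [Form.atomList, hA]))]
  | or φ ψ ihφ ihψ =>
      simp only [Form.evalV]
      rw [ihφ (fun A hA => h A (by simp [Form.atomList, hA])),
        ihψ (fun A hA => h A (by simp [Form.atomList, hA]))]

lemma Form.eval_measurable {Ω : Type*} [MeasurableSpace Ω] (ρ : ℕ → Ω → Bool)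
    (hmeas : ∀ A, Measurable (ρ A)) (φ : Form) : Measurable (φ.eval ρ) := by
  induction φ with
  | atom A => exact hmeas A
  | and φ ψ ihφ ihψ =>
      have : Measurable fun ω => φ.eval ρ ω && ψ.eval ρ ω :=
        (measurable_of_countable (fun p : Bool × Bool => p.1 && p.2)).comp (ihφ.prodMk ihψ)
      exact this
  | or φ ψ ihφ ihψ =>
      have : Measurable fun ω => φ.eval ρ ω || ψ.eval ρ ω :=
        (measurable_of_countable (fun p : Bool × Bool => p.1 || p.2)).comp (ihφ.prodMk ihψ)
      exact this

/-- The evaluation of a formula factors through the atoms it contains. -/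
lemma Form.eval_factor {Ω : Type*} (ρ : ℕ → Ω → Bool) (φ : Form) (ω : Ω) :
    φ.eval ρ ω = φ.evalV (fun A =>
      if h : A ∈ φ.atomList.toFinset then ρ A ω else false) := by
  rw [Form.eval_eq_evalV]
  apply Form.evalV_congr
  intro A hA
  simp [List.mem_toFinset.mpr hA]

lemma indep_eval {Ω : Type*} [MeasurableSpace Ω] (μ : Measure Ω)
    [IsProbabilityMeasure μ]
    (ρ : ℕ → Ω → Bool) (hmeas : ∀ A, Measurable (ρ A))
    (hindep : iIndepFun ρ μ)
    (φ ψ : Form) (hdisj : ∀ A ∈ φ.atomList, A ∉ ψ.atomList) :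
    IndepFun (φ.eval ρ) (ψ.eval ρ) μ := by
  set S := φ.atomList.toFinset
  set T := ψ.atomList.toFinset
  have hST : Disjoint S T := by
    rw [Finset.disjoint_left]
    intro a haS haT
    exact hdisj a (List.mem_toFinset.mp haS) (List.mem_toFinset.mp haT)
  have hbase := hindep.indepFun_finset S T hST hmeas
  have hgφ : Measurable (fun v : {A // A ∈ S} → Bool =>
      φ.evalV (fun A => if h : A ∈ S then v ⟨A, h⟩ else false)) :=
    measurable_of_countable _
  have hgψ : Measurable (fun v : {A // A ∈ T} → Bool =>
      ψ.evalV (fun A => if h : A ∈ T then v ⟨A, h⟩ else false)) :=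
    measurable_of_countable _
  have := hbase.comp hgφ hgψ
  convert this using 1 <;> funext ω
  · exact Form.eval_factor ρ φ ω
  · exact Form.eval_factor ρ ψ ω

lemma confValid (c : ℕ → ℝ × ℝ)
    (hc : ∀ A, 0 ≤ (c A).1 ∧ 0 ≤ (c A).2 ∧ (c A).1 + (c A).2 ≤ 1) (φ : Form) :
    0 ≤ (φ.evalConf c).1 ∧ 0 ≤ (φ.evalConf c).2 ∧
      (φ.evalConf c).1 + (φ.evalConf c).2 ≤ 1 := by
  induction φ with
  | atom A => exact hc A
  | and φ ψ ihφ ihψ =>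
      obtain ⟨h1, h2, h3⟩ := ihφ; obtain ⟨h4, h5, h6⟩ := ihψ
      simp only [Form.evalConf]
      refine ⟨by positivity, by nlinarith, by nlinarith⟩
  | or φ ψ ihφ ihψ =>
      obtain ⟨h1, h2, h3⟩ := ihφ; obtain ⟨h4, h5, h6⟩ := ihψ
      simp only [Form.evalConf]
      refine ⟨by nlinarith, by positivity, by nlinarith⟩

theorem linear_soundness {Ω : Type*} [MeasurableSpace Ω] (μ : Measure Ω)
    [IsProbabilityMeasure μ]
    (ρ : ℕ → Ω → Bool) (hmeas : ∀ A, Measurable (ρ A))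
    (hindep : iIndepFun ρ μ)
    (φ : Form) (hlin : φ.Linear) (c : ℕ → ℝ × ℝ)
    (hc : ∀ A, 0 ≤ (c A).1 ∧ 0 ≤ (c A).2 ∧ (c A).1 + (c A).2 ≤ 1)
    (hconf : ∀ A, (μ {ω | ρ A ω = true}).toReal ∈ Set.Icc (c A).1 (1 - (c A).2)) :
    (μ {ω | φ.eval ρ ω = true}).toReal ∈
      Set.Icc (φ.evalConf c).1 (1 - (φ.evalConf c).2) := by
  induction φ with
  | atom A => exact hconf A
  | and φ ψ ihφ ihψ =>
      have hlinφ : φ.Linear := (List.nodup_append.mp hlin).1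
      have hlinψ : ψ.Linear := (List.nodup_append.mp hlin).2.1
      have hdisj : ∀ A ∈ φ.atomList, A ∉ ψ.atomList :=
        fun A hA hB => (List.nodup_append'.mp hlin).2.2 hA hB
      obtain ⟨hφ1, hφ2⟩ := ihφ hlinφ
      obtain ⟨hψ1, hψ2⟩ := ihψ hlinψ
      have hind := indep_eval μ ρ hmeas hindep φ ψ hdisj
      have hkey : μ {ω | (φ.and ψ).eval ρ ω = true}
          = μ {ω | φ.eval ρ ω = true} * μ {ω | ψ.eval ρ ω = true} := by
        have := hind.measure_inter_preimage_eq_mul {true} {true}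
          (MeasurableSet.singleton true) (MeasurableSet.singleton true)
        convert this using 2
        ext ω
        simp [Form.eval, Set.preimage]
        all_goals rfl
      have htoReal : (μ {ω | (φ.and ψ).eval ρ ω = true}).toReal
          = (μ {ω | φ.eval ρ ω = true}).toReal * (μ {ω | ψ.eval ρ ω = true}).toReal := by
        rw [hkey, ENNReal.toReal_mul]
      obtain ⟨ht1, ht2, ht3⟩ := confValid c hc φ
      obtain ⟨hs1, hs2, hs3⟩ := confValid c hc ψ
      constructor
      · show (φ.evalConf c).1 * (ψ.evalConf c).1 ≤ _
        rw [htoReal]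
        nlinarith [ht1, hs1, ENNReal.toReal_nonneg (a := μ {ω | φ.eval ρ ω = true}),
          ENNReal.toReal_nonneg (a := μ {ω | ψ.eval ρ ω = true})]
      · show _ ≤ 1 - ((φ.evalConf c).2 + (ψ.evalConf c).2 - (φ.evalConf c).2 * (ψ.evalConf c).2)
        rw [htoReal]
        nlinarith [hφ1, hφ2, hψ1, hψ2]
  | or φ ψ ihφ ihψ =>
      have hlinφ : φ.Linear := (List.nodup_append.mp hlin).1
      have hlinψ : ψ.Linear := (List.nodup_append.mp hlin).2.1
      have hdisj : ∀ A ∈ φ.atomList, A ∉ ψ.atomList :=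
        fun A hA hB => (List.nodup_append'.mp hlin).2.2 hA hB
      obtain ⟨hφ1, hφ2⟩ := ihφ hlinφ
      obtain ⟨hψ1, hψ2⟩ := ihψ hlinψ
      have hind := indep_eval μ ρ hmeas hindep φ ψ hdisj
      set A := {ω | φ.eval ρ ω = true}
      set B := {ω | ψ.eval ρ ω = true}
      have hAm : MeasurableSet A := (Form.eval_measurable ρ hmeas φ) (MeasurableSet.singleton true)
      have hBm : MeasurableSet B := (Form.eval_measurable ρ hmeas ψ) (MeasurableSet.singleton true)
      have hkey : μ (A ∩ B) = μ A * μ B := by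
        have := hind.measure_inter_preimage_eq_mul {true} {true}
          (MeasurableSet.singleton true) (MeasurableSet.singleton true)
        convert this using 2
        all_goals rfl
      have hunion : {ω | (φ.or ψ).eval ρ ω = true} = A ∪ B := by
        ext ω; simp [Form.eval, A, B, Set.mem_union]
      have hsum : μ (A ∪ B) + μ (A ∩ B) = μ A + μ B :=
        measure_union_add_inter A hBm
      have hfin : ∀ s : Set Ω, μ s ≠ ⊤ := fun s => measure_ne_top μ s
      have hsumR : (μ (A ∪ B)).toReal + (μ A).toReal * (μ B).toReal
          = (μ A).toReal + (μ B).toReal := by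
        have := congrArg ENNReal.toReal hsum
        rw [ENNReal.toReal_add (hfin _) (hfin _), ENNReal.toReal_add (hfin _) (hfin _),
          hkey, ENNReal.toReal_mul] at this
        linarith [this]
      obtain ⟨ht1, ht2, ht3⟩ := confValid c hc φ
      obtain ⟨hs1, hs2, hs3⟩ := confValid c hc ψ
      rw [Set.mem_Icc]
      have hAle : (μ A).toReal ≤ 1 := by
        rw [← ENNReal.toReal_one]
        exact ENNReal.toReal_mono (by simp) prob_le_one
      have hBle : (μ B).toReal ≤ 1 := by
        rw [← ENNReal.toReal_one]
        exact ENNReal.toReal_mono (by simp) prob_le_one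
      constructor
      · show (φ.evalConf c).1 + (ψ.evalConf c).1 - (φ.evalConf c).1 * (ψ.evalConf c).1 ≤ _
        rw [hunion]
        nlinarith [hφ1, hψ1, hsumR]
      · show _ ≤ 1 - (φ.evalConf c).2 * (ψ.evalConf c).2
        rw [hunion]
        nlinarith [hφ2, hψ2, hsumR]
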